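/- arXiv:math/0601114 — 2 statements merged into one kernel-verified Lean document; each statement's English description precedes it below -/
import Mathlib

section
/- Let q be a real quadratic form of signature (1, k-1) on V, P a connected component of {v : q(v) > 0}, and C a closed convex cone in V with nonempty interior containing the closure of P. If x lies in the closure of P, y ∈ C, q(x) = 0, and q(x, y) > 0, then x + y lies in the interior of C. -/
noncomputable section

/-- `Q` has signature `(1, k-1)`: it is diagonalizable with one positive and
`k - 1` negative squares. -/
def HasSignatureOnePos (k : ℕ) {V : Type*} [AddCommGroup V] [Module ℝ V]
    (Q : QuadraticForm ℝ V) : Prop :=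
  ∃ e : V ≃ₗ[ℝ] (Fin 1 ⊕ Fin (k - 1) → ℝ),
    ∀ v, Q v = (e v (Sum.inl 0)) ^ 2 - ∑ i : Fin (k - 1), (e v (Sum.inr i)) ^ 2

/-- The associated symmetric bilinear form (polarization) of `Q`. -/
def bil {V : Type*} [AddCommGroup V] [Module ℝ V]
    (Q : QuadraticForm ℝ V) (u v : V) : ℝ :=
  (Q (u + v) - Q u - Q v) / 2

section Aux

variable {V : Type*} [AddCommGroup V] [Module ℝ V] (Q : QuadraticForm ℝ V)

lemma bil_eq_polar (u v : V) : bil Q u v = QuadraticMap.polar Q u v / 2 := rfl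

lemma bil_expand (u w : V) : Q (u + w) = Q u + Q w + 2 * bil Q u w := by
  simp only [bil]; ring

lemma bil_self (v : V) : bil Q v v = Q v := by
  have h : Q (v + v) = (2 * 2 : ℝ) • Q v := by
    rw [← two_smul ℝ v, QuadraticMap.map_smul]
  simp only [bil, h, smul_eq_mul]; ring

lemma bil_add_left (u u' v : V) : bil Q (u + u') v = bil Q u v + bil Q u' v := by
  have h := QuadraticMap.polar_add_left (Q := Q) u u' v
  simp only [bil_eq_polar, h]; ring

lemma bil_smul_left (c : ℝ) (u v : V) : bil Q (c • u) v = c * bil Q u v := by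
  have h := QuadraticMap.polar_smul_left (Q := Q) c u v
  simp only [bil_eq_polar, h, smul_eq_mul]; ring

lemma bil_add_right (u v v' : V) : bil Q u (v + v') = bil Q u v + bil Q u v' := by
  have h := QuadraticMap.polar_add_right (Q := Q) u v v'
  simp only [bil_eq_polar, h]; ring

lemma bil_smul_right (c : ℝ) (u v : V) : bil Q u (c • v) = c * bil Q u v := by
  have h := QuadraticMap.polar_smul_right (Q := Q) c u v
  simp only [bil_eq_polar, h, smul_eq_mul]; ring

lemma Q_add_smul (u v : V) (t : ℝ) :
    Q (u + t • v) = Q u + 2 * t * bil Q u v + t ^ 2 * Q v := by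
  rw [bil_expand, QuadraticMap.map_smul, bil_smul_right, smul_eq_mul]; ring

/-- `bil Q` as a linear map in two variables. -/
def bilₗ : V →ₗ[ℝ] V →ₗ[ℝ] ℝ :=
  LinearMap.mk₂ ℝ (bil Q) (bil_add_left Q) (bil_smul_left Q)
    (bil_add_right Q) (bil_smul_right Q)

end Aux


section Bound

variable {V : Type*} [NormedAddCommGroup V] [NormedSpace ℝ V] [FiniteDimensional ℝ V]
  (Q : QuadraticForm ℝ V)

/-- `bil Q` as a continuous bilinear map. -/
def bilL2 : V →L[ℝ] (V →L[ℝ] ℝ) :=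
  LinearMap.toContinuousLinearMap
    ((LinearMap.toContinuousLinearMap.toLinearMap).comp (bilₗ Q))

lemma bilL2_apply (u v : V) : bilL2 Q u v = bil Q u v := by
  unfold bilL2
  rw [LinearMap.coe_toContinuousLinearMap']
  show (LinearMap.toContinuousLinearMap ((bilₗ Q) u)) v = _
  rw [LinearMap.coe_toContinuousLinearMap']
  rfl

lemma bil_bound : ∃ M : ℝ, 0 < M ∧ ∀ u v : V, |bil Q u v| ≤ M * ‖u‖ * ‖v‖ := by
  refine ⟨‖bilL2 Q‖ + 1, by positivity, fun u v => ?_⟩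
  have h1 : ‖bilL2 Q u v‖ ≤ ‖bilL2 Q u‖ * ‖v‖ := (bilL2 Q u).le_opNorm v
  have h2 : ‖bilL2 Q u‖ ≤ ‖bilL2 Q‖ * ‖u‖ := (bilL2 Q).le_opNorm u
  have h3 : |bil Q u v| = ‖bilL2 Q u v‖ := by
    rw [bilL2_apply]; simp [Real.norm_eq_abs]
  nlinarith [norm_nonneg v, norm_nonneg u, norm_nonneg (bilL2 Q u),
    norm_nonneg (bilL2 Q)]

lemma Q_cont : Continuous fun v : V => Q v := by
  have h : Continuous fun v : V => bilL2 Q v v :=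
    (bilL2 Q).continuous.clm_apply continuous_id
  have h2 : (fun v : V => bilL2 Q v v) = fun v : V => Q v := by
    funext v; rw [bilL2_apply, bil_self]
  rwa [h2] at h

end Bound

open Pointwise in
set_option maxHeartbeats 1000000 in
theorem stmt6 {V : Type*} [NormedAddCommGroup V] [NormedSpace ℝ V]
    [FiniteDimensional ℝ V] (k : ℕ) (hk : 2 ≤ k)
    (Q : QuadraticForm ℝ V) (hQ : HasSignatureOnePos k Q)
    (P : Set V)
    (hP : ∃ x ∈ {v : V | 0 < Q v}, P = connectedComponentIn {v : V | 0 < Q v} x)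
    (C : Set V) (hCclosed : IsClosed C) (hCconv : Convex ℝ C)
    (hCcone : ∀ c : ℝ, 0 ≤ c → ∀ v ∈ C, c • v ∈ C)
    (hPC : closure P ⊆ C) (hCint : (interior C).Nonempty)
    (x y : V) (hx : x ∈ closure P) (hy : y ∈ C)
    (hx0 : Q x = 0) (hxy : 0 < bil Q x y) :
    x + y ∈ interior C := by
  classical
  obtain ⟨x₀, hx₀, hPdef⟩ := hP
  set U : Set V := {v : V | 0 < Q v} with hUdef
  -- a continuous bilinear version of `bil Q`, to get bounds and continuity
  obtain ⟨M, hM0, hMb⟩ := bil_bound Q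
  have hQc : Continuous fun v : V => Q v := Q_cont Q
  have hUopen : IsOpen U := isOpen_lt continuous_const hQc
  have hPopen : IsOpen P := hPdef ▸ hUopen.connectedComponentIn
  have hPU : P ⊆ U := hPdef ▸ connectedComponentIn_subset U x₀
  have hPint : P ⊆ interior C :=
    interior_maximal (fun p hp => hPC (subset_closure hp)) hPopen
  set b : ℝ := bil Q x y with hbdef
  have hb0 : 0 < b := hxy
  have hQy : |Q y| ≤ M * ‖y‖ ^ 2 := by
    have h := hMb y y
    rw [bil_self] at h
    nlinarith only [h]
  -- choose t
  set t : ℝ := min (1 / 2) (b / (2 * M * (‖y‖ ^ 2 + 1))) with htdef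
  have ht0 : 0 < t := lt_min (by norm_num) (div_pos hb0 (by positivity))
  have ht1 : t ≤ 1 / 2 := min_le_left _ _
  have htb : t * (M * ‖y‖ ^ 2) ≤ b / 2 := by
    have h := min_le_right (1 / 2) (b / (2 * M * (‖y‖ ^ 2 + 1)))
    rw [le_div_iff₀ (by positivity)] at h
    nlinarith only [h, mul_nonneg ht0.le hM0.le]
  set z : V := x + t • y with hzdef
  have hQz : t * b ≤ Q z := by
    have h := Q_add_smul Q x y t
    rw [hx0, ← hbdef, ← hzdef] at h
    have h2 : -(t * (b / 2)) ≤ t ^ 2 * Q y := by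
      have hlow : -(M * ‖y‖ ^ 2) ≤ Q y := by linarith [(abs_le.mp hQy).1]
      nlinarith only [mul_le_mul_of_nonneg_left hlow (sq_nonneg t),
        mul_le_mul_of_nonneg_left htb ht0.le]
    nlinarith only [h, h2, mul_nonneg ht0.le hb0.le]
  -- choose ε
  set ε : ℝ := min 1 (min (b / (2 * M * (‖y‖ + 1)))
      (t * b / (2 * M * (2 * ‖z‖ + 1)))) with hεdef
  have hε0 : 0 < ε := by
    refine lt_min one_pos (lt_min ?_ ?_)
    · positivity
    · have : 0 < t * b := mul_pos ht0 hb0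
      positivity
  have hε1 : ε ≤ 1 := min_le_left _ _
  have hεy : ε * (2 * M * (‖y‖ + 1)) ≤ b := by
    have h := (min_le_right 1 _).trans
      (min_le_left (b / (2 * M * (‖y‖ + 1))) (t * b / (2 * M * (2 * ‖z‖ + 1))))
    calc ε * (2 * M * (‖y‖ + 1))
        ≤ (b / (2 * M * (‖y‖ + 1))) * (2 * M * (‖y‖ + 1)) := by
          apply mul_le_mul_of_nonneg_right h (by positivity)
      _ = b := by field_simp
  have hεz : ε * (2 * M * (2 * ‖z‖ + 1)) ≤ t * b := by
    have h := (min_le_right 1 _).trans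
      (min_le_right (b / (2 * M * (‖y‖ + 1))) (t * b / (2 * M * (2 * ‖z‖ + 1))))
    calc ε * (2 * M * (2 * ‖z‖ + 1))
        ≤ (t * b / (2 * M * (2 * ‖z‖ + 1))) * (2 * M * (2 * ‖z‖ + 1)) := by
          apply mul_le_mul_of_nonneg_right h (by positivity)
      _ = t * b := by field_simp
  -- choose p ∈ P close to x
  obtain ⟨p, hpP, hpd⟩ : ∃ p ∈ P, ‖p - x‖ < ε := by
    obtain ⟨p, hpP, hd⟩ := Metric.mem_closure_iff.mp hx ε hε0
    exact ⟨p, hpP, by rwa [dist_comm, dist_eq_norm] at hd⟩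
  set d : V := p - x with hddef
  have hdε : ‖d‖ ≤ ε := hpd.le
  have hpU : 0 < Q p := hPU hpP
  have hpxd : p = x + d := by rw [hddef]; abel
  -- bil Q p y is at least b/2
  have hbp : b / 2 ≤ bil Q p y := by
    have h1 : bil Q p y = b + bil Q d y := by
      rw [hpxd, bil_add_left, hbdef]
    have h2 : |bil Q d y| ≤ M * ‖d‖ * ‖y‖ := hMb d y
    have h3 : M * ‖d‖ * ‖y‖ ≤ M * ε * ‖y‖ := by
      apply mul_le_mul_of_nonneg_right _ (norm_nonneg y)
      exact mul_le_mul_of_nonneg_left hdε hM0.le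
    have h4 : M * ε * ‖y‖ ≤ b / 2 := by
      nlinarith only [hεy, mul_nonneg hM0.le hε0.le]
    linarith [(abs_le.mp h2).1]
  -- the two segments lie in U
  have hS1U : segment ℝ p (p + t • y) ⊆ U := by
    rintro w ⟨a, c, ha, hc, hac, rfl⟩
    have hw : a • p + c • (p + t • y) = p + (c * t) • y := by
      rw [smul_add, ← add_assoc, ← add_smul, hac, one_smul, smul_smul]
    rw [hw]
    show 0 < Q (p + (c * t) • y)
    rw [Q_add_smul]
    set s : ℝ := c * t with hsdef
    have hs0 : 0 ≤ s := mul_nonneg hc ht0.le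
    have hc1 : c ≤ 1 := by linarith only [ha, hac]
    have hst : s ≤ t := by
      rw [hsdef]; exact mul_le_of_le_one_left ht0.le hc1
    have hQylow : -(M * ‖y‖ ^ 2) ≤ Q y := by linarith [(abs_le.mp hQy).1]
    have hMy2 : (0 : ℝ) ≤ M * ‖y‖ ^ 2 := by positivity
    have h2 : -(s * (b / 2)) ≤ s ^ 2 * Q y := by
      nlinarith only [mul_le_mul_of_nonneg_left hQylow (sq_nonneg s),
        mul_le_mul_of_nonneg_left (mul_le_mul_of_nonneg_right hst hMy2) hs0,
        mul_le_mul_of_nonneg_left htb hs0]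
    nlinarith only [hpU, h2,
      mul_le_mul_of_nonneg_left hbp (by linarith only [hs0] : (0:ℝ) ≤ 2 * s),
      mul_nonneg hs0 hb0.le]
  have hS2U : segment ℝ (p + t • y) z ⊆ U := by
    rintro w ⟨a, c, ha, hc, hac, rfl⟩
    have hc' : c = 1 - a := by linarith
    have hw : a • (p + t • y) + c • z = z + a • d := by
      rw [hc', hzdef, hddef]; module
    rw [hw]
    show 0 < Q (z + a • d)
    rw [Q_add_smul]
    have ha1 : a ≤ 1 := by linarith
    have hb1 : |bil Q z d| ≤ M * ‖z‖ * ε := by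
      refine (hMb z d).trans ?_
      exact mul_le_mul_of_nonneg_left hdε (by positivity)
    have hb2 : |Q d| ≤ M * ε := by
      have h := hMb d d
      rw [bil_self] at h
      have hd2 : ‖d‖ * ‖d‖ ≤ ε := by
        nlinarith only [hdε, hε1, norm_nonneg d, hε0.le]
      nlinarith only [h, mul_le_mul_of_nonneg_left hd2 hM0.le]
    have e1 : -(M * ‖z‖ * ε) ≤ bil Q z d := by linarith [(abs_le.mp hb1).1]
    have e2 : -(M * ε) ≤ Q d := by linarith [(abs_le.mp hb2).1]
    have htb0 : 0 < t * b := mul_pos ht0 hb0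
    have ha2 : (0:ℝ) ≤ 1 - a ^ 2 := by
      nlinarith only [mul_nonneg ha (by linarith only [ha1] : (0:ℝ) ≤ 1 - a), ha1]
    nlinarith only [hQz, hεz, htb0,
      mul_le_mul_of_nonneg_left e1 (by linarith only [ha] : (0:ℝ) ≤ 2 * a),
      mul_nonneg (sq_nonneg a) (by linarith only [e2] : (0:ℝ) ≤ Q d + M * ε),
      mul_nonneg ha2 (by positivity : (0:ℝ) ≤ M * ε),
      mul_nonneg (by linarith only [ha1] : (0:ℝ) ≤ 1 - a)
        (by positivity : (0:ℝ) ≤ M * ‖z‖ * ε)]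
  -- z belongs to P
  have hzP : z ∈ P := by
    have hconn : IsPreconnected (segment ℝ p (p + t • y) ∪ segment ℝ (p + t • y) z) :=
      (convex_segment _ _).isPreconnected.union (p + t • y)
        (right_mem_segment ℝ _ _) (left_mem_segment ℝ _ _)
        (convex_segment _ _).isPreconnected
    have hsub : segment ℝ p (p + t • y) ∪ segment ℝ (p + t • y) z ⊆ U :=
      Set.union_subset hS1U hS2U
    have hzc : z ∈ connectedComponentIn U p :=
      hconn.subset_connectedComponentIn (Or.inl (left_mem_segment ℝ _ _)) hsub
        (Or.inr (right_mem_segment ℝ _ _))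
    have hPp : P = connectedComponentIn U p := by
      rw [hPdef]; exact connectedComponentIn_eq (hPdef ▸ hpP)
    rw [hPp]; exact hzc
  have hzint : z ∈ interior C := hPint hzP
  have hy' : (1 - t) • y ∈ C := hCcone _ (by linarith) y hy
  have hmid : (1 / 2 : ℝ) • z + (1 / 2 : ℝ) • ((1 - t) • y) ∈ interior C :=
    hCconv.combo_interior_closure_mem_interior hzint (subset_closure hy')
      (by norm_num) (by norm_num) (by norm_num)
  have hscale : (2 : ℝ) • ((1 / 2 : ℝ) • z + (1 / 2 : ℝ) • ((1 - t) • y))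
      ∈ interior C := by
    have hsub : (2 : ℝ) • interior C ⊆ C := by
      rintro _ ⟨w, hw, rfl⟩
      exact hCcone 2 (by norm_num) w (interior_subset hw)
    have hopen : IsOpen ((2 : ℝ) • interior C) := isOpen_interior.smul₀ (two_ne_zero (α := ℝ))
    exact interior_maximal hsub hopen ⟨_, hmid, rfl⟩
  have hfin : x + y = (2 : ℝ) • ((1 / 2 : ℝ) • z + (1 / 2 : ℝ) • ((1 - t) • y)) := by
    rw [hzdef]; module
  rw [hfin]; exact hscale
end
end

section
/- Let V be a finite-dimensional real vector space, q a quadratic form of signature (1, k-1), and P a connected component of {q > 0}. If a, b ∈ closure(P), q(a) = 0, q(b) = 0, and a, b are not proportional, then q(a, b) > 0. -/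
noncomputable section

open scoped RealInnerProductSpace

theorem stmt9 {V : Type*} [NormedAddCommGroup V] [NormedSpace ℝ V]
    [FiniteDimensional ℝ V] (k : ℕ) (hk : 2 ≤ k)
    (Q : QuadraticForm ℝ V) (hQ : HasSignatureOnePos k Q)
    (P : Set V)
    (hP : ∃ x ∈ {v : V | 0 < Q v}, P = connectedComponentIn {v : V | 0 < Q v} x)
    (a b : V) (ha : a ∈ closure P) (hb : b ∈ closure P)
    (ha0 : Q a = 0) (hb0 : Q b = 0)
    (hprop : ¬ ∃ c : ℝ, b = c • a ∨ a = c • b) :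
    0 < bil Q a b := by
  obtain ⟨e, he⟩ := hQ
  let t : V →ₗ[ℝ] ℝ := (LinearMap.proj (Sum.inl 0 : Fin 1 ⊕ Fin (k - 1))).comp e.toLinearMap
  let w : V →ₗ[ℝ] EuclideanSpace ℝ (Fin (k - 1)) :=
    ((WithLp.linearEquiv 2 ℝ (Fin (k - 1) → ℝ)).symm.toLinearMap.comp
      (LinearMap.funLeft ℝ ℝ Sum.inr)).comp e.toLinearMap
  have ht : ∀ v, t v = e v (Sum.inl 0) := fun v => rfl
  have hwc : ∀ (v : V) (i : Fin (k - 1)), w v i = e v (Sum.inr i) := fun v i => rfl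
  have hnorm : ∀ v, ‖w v‖ ^ 2 = ∑ i, (e v (Sum.inr i)) ^ 2 := by
    intro v
    rw [EuclideanSpace.norm_eq, Real.sq_sqrt (by positivity)]
    refine Finset.sum_congr rfl fun i _ => ?_
    rw [hwc, Real.norm_eq_abs, sq_abs]
  have hQ' : ∀ v, Q v = (t v) ^ 2 - ‖w v‖ ^ 2 := by
    intro v; rw [he, hnorm, ht]
  have hbil : ∀ u v : V, bil Q u v = t u * t v - ⟪w u, w v⟫ := by
    intro u v
    have hn : ‖w u + w v‖ ^ 2 = ‖w u‖ ^ 2 + 2 * ⟪w u, w v⟫ + ‖w v‖ ^ 2 :=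
      norm_add_sq_real _ _
    simp only [bil, hQ' (u + v), hQ' u, hQ' v, map_add, hn]
    ring
  have ct : Continuous t := t.continuous_of_finiteDimensional
  have cw : Continuous fun v => ‖w v‖ := w.continuous_of_finiteDimensional.norm
  have habs : ∀ A B : ℝ, 0 ≤ A → 0 ≤ B → A ^ 2 < B ^ 2 → A < B := by
    intro A B hA hB h; nlinarith
  have hopen : ∀ r : ℝ, IsOpen {v : V | ‖w v‖ < r * t v} :=
    fun r => isOpen_lt cw (continuous_const.mul ct)
  have hconv : ∀ r : ℝ, Convex ℝ {v : V | ‖w v‖ < r * t v} := by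
    intro r y hy z hz c d hc hd hcd
    simp only [Set.mem_setOf_eq] at hy hz ⊢
    have h1 : ‖w (c • y + d • z)‖ ≤ c * ‖w y‖ + d * ‖w z‖ := by
      calc ‖w (c • y + d • z)‖ = ‖c • w y + d • w z‖ := by rw [map_add, map_smul, map_smul]
        _ ≤ ‖c • w y‖ + ‖d • w z‖ := norm_add_le _ _
        _ = c * ‖w y‖ + d * ‖w z‖ := by
            rw [norm_smul, norm_smul, Real.norm_of_nonneg hc, Real.norm_of_nonneg hd]
    have h2 : c * ‖w y‖ + d * ‖w z‖ < r * t (c • y + d • z) := by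
      have h3 : r * t (c • y + d • z) = c * (r * t y) + d * (r * t z) := by
        rw [map_add, map_smul, map_smul]; simp only [smul_eq_mul]; ring
      rw [h3]
      rcases eq_or_lt_of_le hc with h | h
      · have hd1 : d = 1 := by linarith
        rw [← h, hd1]; simpa using hz
      · exact add_lt_add_of_lt_of_le ((mul_lt_mul_iff_right₀ h).2 hy)
          (mul_le_mul_of_nonneg_left hz.le hd)
    exact lt_of_le_of_lt h1 h2
  have hPsS : ∀ r : ℝ, r * r = 1 → {v : V | ‖w v‖ < r * t v} ⊆ {v : V | 0 < Q v} := by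
    intro r hr v hv
    simp only [Set.mem_setOf_eq] at hv ⊢
    have h0 : 0 ≤ ‖w v‖ := norm_nonneg _
    rw [hQ' v]; nlinarith
  have key : ∀ s : ℝ, s * s = 1 → ∀ x ∈ {v : V | 0 < Q v}, ‖w x‖ < s * t x →
      closure (connectedComponentIn {v : V | 0 < Q v} x) ⊆ {v : V | ‖w v‖ ≤ s * t v} := by
    intro s hs2 x hxS hx
    have hdisj : Disjoint {v : V | ‖w v‖ < s * t v} {v : V | ‖w v‖ < (-s) * t v} := by
      rw [Set.disjoint_left]
      intro v hv1 hv2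
      simp only [Set.mem_setOf_eq] at hv1 hv2
      nlinarith [norm_nonneg (w v)]
    have hcover : {v : V | 0 < Q v} ⊆
        {v : V | ‖w v‖ < s * t v} ∪ {v : V | ‖w v‖ < (-s) * t v} := by
      intro v hv
      simp only [Set.mem_setOf_eq, hQ' v] at hv
      have h1 : ‖w v‖ ^ 2 < (t v) ^ 2 := by linarith
      rcases le_or_gt 0 (s * t v) with h | h
      · left
        refine habs _ _ (norm_nonneg _) h ?_
        show ‖w v‖ ^ 2 < (s * t v) ^ 2
        nlinarith
      · right
        refine habs _ _ (norm_nonneg _) (by linarith) ?_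
        show ‖w v‖ ^ 2 < ((-s) * t v) ^ 2
        nlinarith
    have hsub : connectedComponentIn {v : V | 0 < Q v} x ⊆ {v : V | ‖w v‖ < s * t v} :=
      IsPreconnected.subset_left_of_subset_union (hopen s) (hopen (-s)) hdisj
        ((connectedComponentIn_subset _ x).trans hcover)
        ⟨x, mem_connectedComponentIn hxS, hx⟩
        isPreconnected_connectedComponentIn
    have hPpsub : {v : V | ‖w v‖ < s * t v} ⊆ connectedComponentIn {v : V | 0 < Q v} x :=
      (hconv s).isPreconnected.subset_connectedComponentIn hx (hPsS s hs2)
    rw [hsub.antisymm hPpsub]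
    exact closure_minimal (fun v hv => le_of_lt (Set.mem_setOf_eq ▸ hv))
      (isClosed_le cw (continuous_const.mul ct))
  obtain ⟨x, hxS, hPdef⟩ := hP
  have hx2 : ‖w x‖ ^ 2 < (t x) ^ 2 := by
    have := hxS; simp only [Set.mem_setOf_eq, hQ' x] at this; linarith
  obtain ⟨s, hs2, hsx⟩ : ∃ s : ℝ, s * s = 1 ∧ ‖w x‖ < s * t x := by
    rcases le_or_gt 0 (t x) with h | h
    · exact ⟨1, by ring, by nlinarith [norm_nonneg (w x)]⟩
    · exact ⟨-1, by ring, by nlinarith [norm_nonneg (w x)]⟩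
  have hclos := key s hs2 x hxS hsx
  rw [hPdef] at ha hb
  have haw : ‖w a‖ ≤ s * t a := hclos ha
  have hbw : ‖w b‖ ≤ s * t b := hclos hb
  have haq : (t a) ^ 2 = ‖w a‖ ^ 2 := by have := hQ' a; rw [ha0] at this; linarith
  have hbq : (t b) ^ 2 = ‖w b‖ ^ 2 := by have := hQ' b; rw [hb0] at this; linarith
  have hae : s * t a = ‖w a‖ := by
    have h1 : (s * t a) ^ 2 = ‖w a‖ ^ 2 := by
      calc (s * t a) ^ 2 = (s * s) * (t a) ^ 2 := by ring
        _ = ‖w a‖ ^ 2 := by rw [hs2, one_mul, haq]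
    exact le_antisymm (by nlinarith [norm_nonneg (w a)]) haw
  have hbe : s * t b = ‖w b‖ := by
    have h1 : (s * t b) ^ 2 = ‖w b‖ ^ 2 := by
      calc (s * t b) ^ 2 = (s * s) * (t b) ^ 2 := by ring
        _ = ‖w b‖ ^ 2 := by rw [hs2, one_mul, hbq]
    exact le_antisymm (by nlinarith [norm_nonneg (w b)]) hbw
  have hta : t a = s * ‖w a‖ := by linear_combination s * hae - t a * hs2
  have htb : t b = s * ‖w b‖ := by linear_combination s * hbe - t b * hs2
  have htab : t a * t b = ‖w a‖ * ‖w b‖ := by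
    rw [hta, htb]; linear_combination (‖w a‖ * ‖w b‖) * hs2
  rw [hbil a b, htab]
  have hCS : ⟪w a, w b⟫ ≤ ‖w a‖ * ‖w b‖ := real_inner_le_norm _ _
  rcases hCS.lt_or_eq with hlt | heq
  · linarith
  · exfalso
    have hdep : ‖w b‖ • (w a) = ‖w a‖ • (w b) := inner_eq_norm_mul_iff_real.mp heq
    have hVeq : ‖w b‖ • a = ‖w a‖ • b := by
      apply e.injective
      rw [map_smul, map_smul]
      funext j
      rcases j with j | i
      · have hj : j = 0 := Subsingleton.elim _ _
        subst hj
        simp only [Pi.smul_apply, smul_eq_mul]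
        rw [← ht, ← ht, hta, htb]; ring
      · have hi := congrArg (fun f => f i) hdep
        simp only [PiLp.smul_apply, smul_eq_mul] at hi
        simp only [Pi.smul_apply, smul_eq_mul, ← hwc]
        exact hi
    rcases eq_or_ne (‖w a‖) 0 with h0 | h0
    · have hwa0 : w a = 0 := norm_eq_zero.mp h0
      have hta0 : t a = 0 := by rw [hta, h0, mul_zero]
      have hea : e a = 0 := by
        funext j
        rcases j with j | i
        · have hj : j = 0 := Subsingleton.elim _ _
          subst hj
          rw [← ht]; exact hta0
        · have hi := congrArg (fun f => f i) hwa0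
          simp only [PiLp.zero_apply] at hi
          rw [← hwc]; exact hi
      have ha' : a = 0 := by
        apply e.injective; rw [hea, map_zero]
      exact hprop ⟨0, Or.inr (by rw [ha', zero_smul])⟩
    · have hb' : b = (‖w b‖ / ‖w a‖) • a := by
        rw [div_eq_inv_mul, mul_smul, hVeq, inv_smul_smul₀ h0]
      exact hprop ⟨_, Or.inl hb'⟩
end
end
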